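/- Under the push iteration of the previous statement, if in addition every degree satisfies d_i ≥ 1, then the total number of push steps T that can be performed (each on a residual entry of value at least ε, leaving ρε behind) satisfies T ≤ 1/(ε(1−α)(1−ρ)). In particular, the number of nonzero entries of the solution iterate y⁽ᵀ⁾ and the number of indices ever holding a residual value ≥ ε are both at most 1/(ε(1−α)(1−ρ)). -/

import Mathlib

open Matrix

theorem push_step_count_bound {n : ℕ} (A : Matrix (Fin n) (Fin n) ℝ)
    (hAsymm : A.IsSymm) (hA0 : ∀ i j, 0 ≤ A i j)
    (d : Fin n → ℝ) (hd : ∀ i, d i = ∑ j, A i j) (hd1 : ∀ i, 1 ≤ d i)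
    (α ρ ε : ℝ) (hα0 : 0 < α) (hα1 : α < 1) (hρ0 : 0 ≤ ρ) (hρ1 : ρ < 1) (hε : 0 < ε)
    (v : Fin n → ℝ) (hv0 : ∀ i, 0 ≤ v i) (hv1 : ∑ i, v i = 1)
    (T : ℕ) (j : ℕ → Fin n) (y r : ℕ → Fin n → ℝ)
    (hy0 : y 0 = 0) (hr0 : r 0 = (diagonal fun i => (d i)⁻¹) *ᵥ v)
    (hbig : ∀ t < T, ε ≤ r t (j t))
    (hyupd : ∀ t < T, y (t + 1) =
      y t + (r t (j t) - ρ * ε) • (Pi.single (j t) 1 : Fin n → ℝ))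
    (hrupd : ∀ t < T, r (t + 1) =
      r t - (r t (j t) - ρ * ε) •
        ((1 - α • (A * diagonal fun i => (d i)⁻¹)ᵀ) *ᵥ (Pi.single (j t) 1 : Fin n → ℝ))) :
    (T : ℝ) ≤ 1 / (ε * (1 - α) * (1 - ρ)) ∧
    ({i : Fin n | y T i ≠ 0}.ncard : ℝ) ≤ 1 / (ε * (1 - α) * (1 - ρ)) ∧
    ({i : Fin n | ∃ t ≤ T, ε ≤ r t i}.ncard : ℝ) ≤ 1 / (ε * (1 - α) * (1 - ρ)) := by
  classical
  have hd0 : ∀ i, (0:ℝ) < d i := fun i => lt_of_lt_of_le one_pos (hd1 i)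
  have hεc : 0 < ε * (1 - α) * (1 - ρ) := by
    have : 0 < 1 - α := by linarith
    have : 0 < 1 - ρ := by linarith
    positivity
  have hδlb : ∀ t < T, ε * (1 - ρ) ≤ r t (j t) - ρ * ε := by
    intro t ht
    have h1 := hbig t ht
    nlinarith
  have hδpos : ∀ t < T, 0 < r t (j t) - ρ * ε := by
    intro t ht
    have := hδlb t ht
    nlinarith
  -- pointwise form of the matrix-vector product
  have key : ∀ (jt i : Fin n),
      ((1 - α • (A * diagonal fun i => (d i)⁻¹)ᵀ) *ᵥ (Pi.single jt 1 : Fin n → ℝ)) i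
        = (if i = jt then 1 else 0) - α * (A i jt * (d i)⁻¹) := by
    intro jt i
    rw [Matrix.mulVec_single]
    simp only [Matrix.sub_apply, Matrix.smul_apply, Matrix.transpose_apply,
      Matrix.mul_diagonal, Matrix.one_apply, smul_eq_mul, mul_one, MulOpposite.op_one, one_smul,
      Matrix.col_apply]
    rw [hAsymm.apply i jt]
  -- pointwise residual update
  have hr1 : ∀ t < T, ∀ i, r (t+1) i =
      r t i - (r t (j t) - ρ * ε) * ((if i = j t then 1 else 0) - α * (A i (j t) * (d i)⁻¹)) := by
    intro t ht i
    rw [hrupd t ht]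
    simp only [Pi.sub_apply, Pi.smul_apply, smul_eq_mul, key]
  -- weighted residual update
  have hw1 : ∀ t < T, ∀ i, d i * r (t+1) i =
      d i * r t i - (r t (j t) - ρ * ε) * (d i * (if i = j t then 1 else 0))
        + α * ((r t (j t) - ρ * ε) * A i (j t)) := by
    intro t ht i
    rw [hr1 t ht i]
    have hdi : d i * (d i)⁻¹ = 1 := mul_inv_cancel₀ (hd0 i).ne'
    by_cases h : i = j t
    · subst h; rw [if_pos rfl]
      linear_combination ((r t (j t) - ρ * ε) * α * A (j t) (j t)) * hdi
    · rw [if_neg h]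
      linear_combination ((r t (j t) - ρ * ε) * α * A i (j t)) * hdi
  have hr0' : ∀ i, r 0 i = (d i)⁻¹ * v i := by
    intro i; rw [hr0]; simp [Matrix.mulVec_diagonal]
  -- residuals remain nonnegative
  have hrnn : ∀ t, t ≤ T → ∀ i, 0 ≤ r t i := by
    intro t
    induction t with
    | zero =>
      intro _ i
      rw [hr0' i]
      exact mul_nonneg (inv_nonneg.mpr (hd0 i).le) (hv0 i)
    | succ t ih =>
      intro ht i
      have ht' : t < T := ht
      have ih' := ih (le_of_lt ht')
      rw [hr1 t ht' i]
      have hnn : 0 ≤ (r t (j t) - ρ * ε) * (α * (A i (j t) * (d i)⁻¹)) := by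
        apply mul_nonneg (hδpos t ht').le
        have := hA0 i (j t)
        have := (hd0 i).le
        positivity
      by_cases h : i = j t
      · subst h
        have := hbig t ht'
        have hρε : 0 ≤ ρ * ε := mul_nonneg hρ0 hε.le
        have hexp : r t (j t) - (r t (j t) - ρ * ε) * (1 - α * (A (j t) (j t) * (d (j t))⁻¹))
            = ρ * ε + (r t (j t) - ρ * ε) * (α * (A (j t) (j t) * (d (j t))⁻¹)) := by ring
        rw [if_pos rfl, hexp]
        linarith
      · simp only [if_neg h]
        have := ih' i
        nlinarith
  -- mass decrease per step
  have hmass : ∀ t < T, (∑ i, d i * r (t+1) i) =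
      (∑ i, d i * r t i) - (r t (j t) - ρ * ε) * (1 - α) * d (j t) := by
    intro t ht
    have h1 : (∑ i, d i * r (t+1) i) =
        (∑ i, d i * r t i) - (r t (j t) - ρ * ε) * (∑ i, d i * (if i = j t then 1 else 0))
          + α * ((r t (j t) - ρ * ε) * (∑ i, A i (j t))) := by
      rw [Finset.sum_congr rfl (fun i _ => hw1 t ht i)]
      rw [Finset.sum_add_distrib, Finset.sum_sub_distrib, ← Finset.mul_sum, ← Finset.mul_sum,
        ← Finset.mul_sum]
    rw [h1]
    have h2 : (∑ i, d i * (if i = j t then 1 else 0)) = d (j t) := by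
      simp [mul_ite]
    have h3 : (∑ i, A i (j t)) = d (j t) := by
      rw [hd (j t)]
      exact Finset.sum_congr rfl (fun i _ => (hAsymm.apply i (j t)).symm)
    rw [h2, h3]; ring
  have hS0 : (∑ i, d i * r 0 i) = 1 := by
    rw [← hv1]
    refine Finset.sum_congr rfl (fun i _ => ?_)
    rw [hr0' i, ← mul_assoc, mul_inv_cancel₀ (hd0 i).ne', one_mul]
  -- telescoped mass identity
  have htel : ∀ t, t ≤ T → (∑ i, d i * r t i)
      + ∑ s ∈ Finset.range t, (r s (j s) - ρ * ε) * (1 - α) * d (j s) = 1 := by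
    intro t
    induction t with
    | zero => intro _; simpa using hS0
    | succ t ih =>
      intro ht
      have ht' : t < T := ht
      rw [hmass t ht', Finset.sum_range_succ]
      have := ih (le_of_lt ht')
      linarith
  have hSTnn : 0 ≤ ∑ i, d i * r T i :=
    Finset.sum_nonneg fun i _ => mul_nonneg (hd0 i).le (hrnn T le_rfl i)
  have hterm : ∀ s ∈ Finset.range T, ε * (1 - α) * (1 - ρ) ≤
      (r s (j s) - ρ * ε) * (1 - α) * d (j s) := by
    intro s hs
    rw [Finset.mem_range] at hs
    have h1 := hδlb s hs
    have h2 := hd1 (j s)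
    have h3 : (0:ℝ) < 1 - α := by linarith
    have ha : 0 < r s (j s) - ρ * ε := hδpos s hs
    have h4 : ε * (1 - ρ) * (1 - α) ≤ (r s (j s) - ρ * ε) * (1 - α) :=
      mul_le_mul_of_nonneg_right h1 h3.le
    have h5 : (r s (j s) - ρ * ε) * (1 - α) ≤ (r s (j s) - ρ * ε) * (1 - α) * d (j s) :=
      le_mul_of_one_le_right (by positivity) h2
    calc ε * (1 - α) * (1 - ρ) = ε * (1 - ρ) * (1 - α) := by ring
      _ ≤ _ := le_trans h4 h5
  have hsumT : ∑ s ∈ Finset.range T, (r s (j s) - ρ * ε) * (1 - α) * d (j s) ≤ 1 := by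
    have := htel T le_rfl
    linarith
  have hTbound : (T : ℝ) * (ε * (1 - α) * (1 - ρ)) ≤ 1 := by
    have hle := Finset.card_nsmul_le_sum (Finset.range T)
      (fun s => (r s (j s) - ρ * ε) * (1 - α) * d (j s)) (ε * (1 - α) * (1 - ρ)) hterm
    rw [Finset.card_range, nsmul_eq_mul] at hle
    linarith
  have hT : (T : ℝ) ≤ 1 / (ε * (1 - α) * (1 - ρ)) := by
    rw [le_div_iff₀ hεc]; exact hTbound
  refine ⟨hT, ?_, ?_⟩
  · -- support of y
    have hysup : ∀ t, t ≤ T → ∀ i, y t i ≠ 0 → ∃ s < t, j s = i := by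
      intro t
      induction t with
      | zero => intro _ i hi; rw [hy0] at hi; simp at hi
      | succ t ih =>
        intro ht i hi
        have ht' : t < T := ht
        rw [hyupd t ht'] at hi
        by_cases h : i = j t
        · exact ⟨t, Nat.lt_succ_self t, h.symm⟩
        · simp only [Pi.add_apply, Pi.smul_apply, Pi.single_apply, if_neg h,
            smul_eq_mul, mul_zero, add_zero] at hi
          obtain ⟨s, hs, hjs⟩ := ih (le_of_lt ht') i hi
          exact ⟨s, Nat.lt_succ_of_lt hs, hjs⟩
    have hsub : {i : Fin n | y T i ≠ 0} ⊆ ((Finset.range T).image j : Finset (Fin n)) := by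
      intro i hi
      obtain ⟨s, hs, hjs⟩ := hysup T le_rfl i hi
      simp only [Finset.coe_image, Finset.coe_range, Set.mem_image, Set.mem_Iio]
      exact ⟨s, hs, hjs⟩
    have h1 : ({i : Fin n | y T i ≠ 0}.ncard : ℝ) ≤ (T : ℝ) := by
      have h2 : {i : Fin n | y T i ≠ 0}.ncard ≤ ((Finset.range T).image j).card := by
        rw [← Set.ncard_coe_finset]
        exact Set.ncard_le_ncard hsub ((Finset.range T).image j).finite_toSet
      have h3 : ((Finset.range T).image j).card ≤ T := by
        calc ((Finset.range T).image j).card ≤ (Finset.range T).card :=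
              Finset.card_image_le
          _ = T := Finset.card_range T
      exact_mod_cast le_trans h2 h3
    linarith
  · -- indices ever holding a large residual
    set c : Fin n → ℝ := fun i =>
      d i * r 0 i + α * ∑ s ∈ Finset.range T, (r s (j s) - ρ * ε) * A i (j s) with hc
    have htermnn : ∀ i, ∀ s ∈ Finset.range T, 0 ≤ (r s (j s) - ρ * ε) * A i (j s) := by
      intro i s hs
      rw [Finset.mem_range] at hs
      exact mul_nonneg (hδpos s hs).le (hA0 i (j s))
    have hcnn : ∀ i, 0 ≤ c i := by
      intro i
      have h1 : 0 ≤ d i * r 0 i := mul_nonneg (hd0 i).le (hrnn 0 (Nat.zero_le T) i)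
      have h2 : 0 ≤ ∑ s ∈ Finset.range T, (r s (j s) - ρ * ε) * A i (j s) :=
        Finset.sum_nonneg (htermnn i)
      have : 0 ≤ α * ∑ s ∈ Finset.range T, (r s (j s) - ρ * ε) * A i (j s) :=
        mul_nonneg hα0.le h2
      rw [hc]; dsimp; linarith
    -- upper bound on weighted residuals
    have hub : ∀ t, t ≤ T → ∀ i, d i * r t i ≤
        d i * r 0 i + α * ∑ s ∈ Finset.range t, (r s (j s) - ρ * ε) * A i (j s) := by
      intro t
      induction t with
      | zero => intro _ i; simp
      | succ t ih =>
        intro ht i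
        have ht' : t < T := ht
        have hih := ih (le_of_lt ht') i
        rw [hw1 t ht' i, Finset.sum_range_succ]
        have hnn : 0 ≤ (r t (j t) - ρ * ε) * (d i * (if i = j t then 1 else 0)) := by
          apply mul_nonneg (hδpos t ht').le
          by_cases h : i = j t
          · simp only [if_pos h, mul_one]; exact (hd0 i).le
          · simp [if_neg h]
        linarith
    have hcub : ∀ t, t ≤ T → ∀ i, d i * r t i ≤ c i := by
      intro t ht i
      refine le_trans (hub t ht i) ?_
      rw [hc]; dsimp
      have hmono : ∑ s ∈ Finset.range t, (r s (j s) - ρ * ε) * A i (j s) ≤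
          ∑ s ∈ Finset.range T, (r s (j s) - ρ * ε) * A i (j s) := by
        apply Finset.sum_le_sum_of_subset_of_nonneg
          (Finset.range_subset_range.mpr ht)
        intro s hs _
        exact htermnn i s hs
      nlinarith
    -- sum of c
    have hsumc : (∑ i, c i) ≤ 1 / (1 - α) := by
      have h1α : (0:ℝ) < 1 - α := by linarith
      have hswap : (∑ i, ∑ s ∈ Finset.range T, (r s (j s) - ρ * ε) * A i (j s))
          = ∑ s ∈ Finset.range T, (r s (j s) - ρ * ε) * d (j s) := by
        rw [Finset.sum_comm]
        refine Finset.sum_congr rfl (fun s _ => ?_)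
        rw [← Finset.mul_sum]
        congr 1
        rw [hd (j s)]
        exact Finset.sum_congr rfl (fun i _ => (hAsymm.apply i (j s)).symm)
      have hsum2 : (1 - α) * ∑ s ∈ Finset.range T, (r s (j s) - ρ * ε) * d (j s) ≤ 1 := by
        have : ∑ s ∈ Finset.range T, (r s (j s) - ρ * ε) * (1 - α) * d (j s)
            = (1 - α) * ∑ s ∈ Finset.range T, (r s (j s) - ρ * ε) * d (j s) := by
          rw [Finset.mul_sum]; exact Finset.sum_congr rfl (fun s _ => by ring)
        linarith [hsumT, this]
      have hceq : (∑ i, c i) = 1 + α * ∑ s ∈ Finset.range T, (r s (j s) - ρ * ε) * d (j s) := by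
        rw [hc]
        rw [Finset.sum_add_distrib, hS0, ← Finset.mul_sum, hswap]
      rw [hceq]
      rw [le_div_iff₀ h1α]
      nlinarith
    -- the set bound
    set S3 := {i : Fin n | ∃ t ≤ T, ε ≤ r t i} with hS3
    have hεci : ∀ i ∈ S3, ε ≤ c i := by
      intro i hi
      obtain ⟨t, ht, hti⟩ := hi
      have h1 : r t i ≤ d i * r t i := by
        nlinarith [hd1 i, hrnn t ht i]
      linarith [hcub t ht i]
    have hF : S3 = ↑(Finset.univ.filter (fun i => ∃ t ≤ T, ε ≤ r t i)) := by
      ext i; simp [hS3]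
    have hcard : (S3.ncard : ℝ) * ε ≤ 1 / (1 - α) := by
      set F := Finset.univ.filter (fun i : Fin n => ∃ t ≤ T, ε ≤ r t i) with hFdef
      have hn : S3.ncard = F.card := by rw [hF, Set.ncard_coe_finset]
      have h1 : F.card • ε ≤ ∑ i ∈ F, c i := by
        apply Finset.card_nsmul_le_sum
        intro i hi
        apply hεci
        rw [hF]; exact_mod_cast hi
      have h2 : ∑ i ∈ F, c i ≤ ∑ i, c i := by
        apply Finset.sum_le_sum_of_subset_of_nonneg (Finset.subset_univ F)
        intro i _ _; exact hcnn i
      rw [nsmul_eq_mul] at h1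
      rw [hn]
      calc (F.card : ℝ) * ε ≤ ∑ i ∈ F, c i := h1
        _ ≤ ∑ i, c i := h2
        _ ≤ 1 / (1 - α) := hsumc
    have h1α : (0:ℝ) < 1 - α := by linarith
    have h1ρ : (0:ℝ) < 1 - ρ := by linarith
    have hfinal : (S3.ncard : ℝ) ≤ 1 / (ε * (1 - α)) := by
      rw [le_div_iff₀ (by positivity)]
      calc (S3.ncard : ℝ) * (ε * (1 - α)) = ((S3.ncard : ℝ) * ε) * (1 - α) := by ring
        _ ≤ (1 / (1 - α)) * (1 - α) := by
            apply mul_le_mul_of_nonneg_right hcard h1α.le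
        _ = 1 := by field_simp
    refine le_trans hfinal ?_
    apply one_div_le_one_div_of_le (by positivity)
    nlinarith
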